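/- Let μ > 0, x⋆ ∈ ℝ^T, and B the T×T tridiagonal matrix with diagonal (2,…,2,1) and off-diagonals -1. Then min over x ∈ ℝ^T of [(μ/2)‖x - x⋆‖² + (1/2) x^T B x] ≥ (μ/(2(μ+4))) x⋆^T B x⋆ = (μ/(2(μ+4))) ∑_{t=1}^T (x⋆_t - x⋆_{t-1})² with x⋆_0 = 0. -/

import Mathlib

open Finset

/-- Extension of a `Fin T` vector to `ℕ` by zero. -/
noncomputable def vE {T : ℕ} (y : Fin T → ℝ) : ℕ → ℝ :=
  fun n => if h : n < T then y ⟨n, h⟩ else 0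

lemma mulVec_entry {T : ℕ} (B : Matrix (Fin T) (Fin T) ℝ)
    (hB : ∀ i j : Fin T, B i j =
      if i = j then (if (i : ℕ) = T - 1 then 1 else 2)
      else if (i : ℕ) + 1 = (j : ℕ) ∨ (j : ℕ) + 1 = (i : ℕ) then -1 else 0)
    (y : Fin T → ℝ) (i : Fin T) :
    B.mulVec y i = (if (i : ℕ) = T - 1 then 1 else 2) * y i - vE y ((i:ℕ)+1)
      - (if (i:ℕ) = 0 then 0 else vE y ((i:ℕ)-1)) := by
  have hsplit : ∀ j : Fin T, B i j * y j =
      (if j = i then (if (i : ℕ) = T - 1 then 1 else 2) * y i else 0)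
      + (if (j:ℕ) = (i:ℕ)+1 then -y j else 0)
      + (if (i:ℕ) = (j:ℕ)+1 then -y j else 0) := by
    intro j
    rw [hB]
    rcases eq_or_ne i j with h | h
    · subst h
      simp [Fin.ext_iff]
    · have h' : ¬ (j = i) := fun hh => h hh.symm
      rw [if_neg h, if_neg h']
      have hij : (i:ℕ) ≠ (j:ℕ) := fun hh => h (Fin.ext hh)
      by_cases h1 : (i:ℕ) + 1 = (j:ℕ)
      · rw [if_pos (Or.inl h1), if_pos h1.symm, if_neg (by omega)]; ring
      · by_cases h2 : (j:ℕ) + 1 = (i:ℕ)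
        · rw [if_pos (Or.inr h2), if_neg (by omega), if_pos h2.symm]; ring
        · rw [if_neg (by tauto), if_neg (by omega), if_neg (by omega)]; ring
  unfold Matrix.mulVec dotProduct
  simp only [hsplit]
  rw [Finset.sum_add_distrib, Finset.sum_add_distrib, Finset.sum_ite_eq' univ i]
  simp only [mem_univ, if_pos]
  have h2 : (∑ j : Fin T, if (j:ℕ) = (i:ℕ)+1 then -y j else 0) = - vE y ((i:ℕ)+1) := by
    by_cases h : (i:ℕ)+1 < T
    · have : ∀ j : Fin T, ((j:ℕ) = (i:ℕ)+1) ↔ j = ⟨(i:ℕ)+1, h⟩ := by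
        intro j; rw [Fin.ext_iff]
      simp only [this]
      rw [Finset.sum_ite_eq' univ]
      simp [vE, h]
    · have : ∀ j : Fin T, ¬ ((j:ℕ) = (i:ℕ)+1) := by
        intro j hj; exact h (hj ▸ j.isLt)
      simp only [this, if_false, Finset.sum_const_zero]
      simp [vE, h]
  have h3 : (∑ j : Fin T, if (i:ℕ) = (j:ℕ)+1 then -y j else 0)
      = if (i:ℕ) = 0 then 0 else - vE y ((i:ℕ)-1) := by
    by_cases h : (i:ℕ) = 0
    · simp only [h]
      have : ∀ j : Fin T, ¬ ((0:ℕ) = (j:ℕ)+1) := by omega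
      simp [this]
    · rw [if_neg h]
      have hlt : (i:ℕ) - 1 < T := by have := i.isLt; omega
      have : ∀ j : Fin T, ((i:ℕ) = (j:ℕ)+1) ↔ j = ⟨(i:ℕ)-1, hlt⟩ := by
        intro j; rw [Fin.ext_iff]; simp; omega
      simp only [this]
      rw [Finset.sum_ite_eq' univ]
      simp [vE, hlt]
  rw [h2, h3]
  split_ifs <;> ring

lemma sum_id (S : ℕ) (E : ℕ → ℝ) (hE : E (S+1) = 0) :
    ∑ t ∈ range (S+1), E t * ((if t = S then 1 else 2) * E t - E (t+1)
        - (if t = 0 then 0 else E (t-1)))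
    = ∑ t ∈ range (S+1), (E t - (if t = 0 then 0 else E (t-1)))^2 := by
  have expand : ∀ t : ℕ, E t * ((if t = S then 1 else 2) * E t - E (t+1)
      - (if t = 0 then 0 else E (t-1)))
      = (if t = S then 1 else 2) * E t^2 - E t * E (t+1)
        - E t * (if t = 0 then 0 else E (t-1)) := by
    intro t; ring
  simp only [expand]
  rw [Finset.sum_sub_distrib, Finset.sum_sub_distrib]
  have hA : ∑ t ∈ range (S+1), (if t = S then 1 else 2) * E t^2
      = 2 * (∑ t ∈ range S, E t^2) + E S^2 := by
    rw [Finset.sum_range_succ, if_pos rfl]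
    rw [Finset.mul_sum]
    congr 1
    · exact Finset.sum_congr rfl fun t ht => by
        rw [if_neg (Nat.ne_of_lt (Finset.mem_range.mp ht))]
    · ring
  have hC1 : ∑ t ∈ range (S+1), E t * E (t+1) = ∑ t ∈ range S, E t * E (t+1) := by
    rw [Finset.sum_range_succ, hE]; ring
  have hC2 : ∑ t ∈ range (S+1), E t * (if t = 0 then 0 else E (t-1))
      = ∑ t ∈ range S, E t * E (t+1) := by
    rw [Finset.sum_range_succ']
    simp only [Nat.succ_ne_zero, if_neg, Nat.add_sub_cancel, if_pos rfl]
    simp [mul_comm]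
  have hR : ∑ t ∈ range (S+1), (E t - (if t = 0 then 0 else E (t-1)))^2
      = (∑ t ∈ range S, (E (t+1) - E t)^2) + E 0 ^2 := by
    rw [Finset.sum_range_succ']
    simp
  have hexp : ∑ t ∈ range S, (E (t+1) - E t)^2
      = (∑ t ∈ range S, E (t+1)^2) - 2 * (∑ t ∈ range S, E t * E (t+1))
        + ∑ t ∈ range S, E t^2 := by
    rw [Finset.mul_sum, ← Finset.sum_sub_distrib, ← Finset.sum_add_distrib]
    exact Finset.sum_congr rfl fun t _ => by ring
  have hSQ : (∑ t ∈ range S, E (t+1)^2) + E 0^2 = (∑ t ∈ range S, E t^2) + E S^2 := by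
    rw [← Finset.sum_range_succ' (fun t => E t^2) S, Finset.sum_range_succ]
  rw [hA, hC1, hC2, hR, hexp]
  linarith

lemma quad_id {T : ℕ} (B : Matrix (Fin T) (Fin T) ℝ)
    (hB : ∀ i j : Fin T, B i j =
      if i = j then (if (i : ℕ) = T - 1 then 1 else 2)
      else if (i : ℕ) + 1 = (j : ℕ) ∨ (j : ℕ) + 1 = (i : ℕ) then -1 else 0)
    (y : Fin T → ℝ) :
    dotProduct y (B.mulVec y)
      = ∑ t ∈ range T, (vE y t - (if t = 0 then 0 else vE y (t-1)))^2 := by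
  unfold dotProduct
  have h1 : ∀ i : Fin T, y i * B.mulVec y i
      = vE y i * ((if (i:ℕ) = T - 1 then 1 else 2) * vE y i - vE y ((i:ℕ)+1)
          - (if (i:ℕ) = 0 then 0 else vE y ((i:ℕ)-1))) := by
    intro i
    rw [mulVec_entry B hB]
    have : vE y (i:ℕ) = y i := by simp [vE]
    rw [this]
  simp only [h1]
  rw [Fin.sum_univ_eq_sum_range (fun t => vE y t * ((if t = T - 1 then 1 else 2) * vE y t
      - vE y (t+1) - (if t = 0 then 0 else vE y (t-1))))]
  rcases T with _ | S
  · simp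
  · exact sum_id S (vE y) (by simp [vE])

lemma shift_le (T : ℕ) (D : ℕ → ℝ) :
    ∑ t ∈ range T, (if t = 0 then 0 else D (t-1))^2 ≤ ∑ t ∈ range T, D t ^ 2 := by
  cases T with
  | zero => simp
  | succ S =>
    rw [Finset.sum_range_succ' (fun t => (if t = 0 then 0 else D (t-1))^2) S,
      Finset.sum_range_succ]
    simp
    nlinarith [sq_nonneg (D S)]

lemma main_ineq
    (T : ℕ) (μ : ℝ) (hμ : 0 < μ)
    (a b : ℕ → ℝ) (W : ℝ)
    (hZ : ∑ t ∈ range T, (b t - a t)^2 ≤ 4 * W) :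
    μ / (2 * (μ + 4)) * ∑ t ∈ range T, a t ^ 2 ≤
      μ / 2 * W + 1 / 2 * ∑ t ∈ range T, b t ^ 2 := by
  have h4 : (0:ℝ) < μ + 4 := by linarith
  have hp : ∀ t ∈ range T, μ * a t ^ 2 ≤
      (μ+4) * b t ^ 2 + μ*(μ+4)/4 * (b t - a t)^2 := by
    intro t _
    nlinarith [sq_nonneg (2 * b t + μ/2 * (b t - a t))]
  have hsum := Finset.sum_le_sum hp
  rw [← Finset.mul_sum] at hsum
  rw [Finset.sum_add_distrib, ← Finset.mul_sum, ← Finset.mul_sum] at hsum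
  have hprod := mul_le_mul_of_nonneg_left hZ (show (0:ℝ) ≤ μ*(μ+4)/4 by positivity)
  rw [div_mul_eq_mul_div, div_le_iff₀ (by positivity)]
  nlinarith [hsum, hprod]

theorem quadratic_min_lower_bound
    (T : ℕ) (μ : ℝ) (hμ : 0 < μ)
    (B : Matrix (Fin T) (Fin T) ℝ)
    (hB : ∀ i j : Fin T, B i j =
      if i = j then (if (i : ℕ) = T - 1 then 1 else 2)
      else if (i : ℕ) + 1 = (j : ℕ) ∨ (j : ℕ) + 1 = (i : ℕ) then -1 else 0)
    (xs : ℕ → ℝ) (hxs0 : xs 0 = 0)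
    (xstar : Fin T → ℝ) (hxstar : ∀ i : Fin T, xstar i = xs ((i : ℕ) + 1)) :
    (∀ x : Fin T → ℝ,
      μ / (2 * (μ + 4)) * dotProduct xstar (B.mulVec xstar) ≤
        μ / 2 * ∑ i : Fin T, (x i - xstar i) ^ 2
          + 1 / 2 * dotProduct x (B.mulVec x)) ∧
    μ / (2 * (μ + 4)) * dotProduct xstar (B.mulVec xstar) =
      μ / (2 * (μ + 4)) * ∑ t ∈ Finset.Icc 1 T, (xs t - xs (t - 1)) ^ 2 := by
  constructor
  · intro x
    rw [quad_id B hB xstar, quad_id B hB x]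
    set d : Fin T → ℝ := fun i => x i - xstar i with hd
    have hZ : ∑ t ∈ range T,
        ((vE x t - (if t = 0 then 0 else vE x (t-1)))
          - (vE xstar t - (if t = 0 then 0 else vE xstar (t-1))))^2
        ≤ 4 * ∑ i : Fin T, (x i - xstar i) ^ 2 := by
      have heq : ∀ t : ℕ,
          (vE x t - (if t = 0 then 0 else vE x (t-1)))
            - (vE xstar t - (if t = 0 then 0 else vE xstar (t-1)))
          = vE d t - (if t = 0 then 0 else vE d (t-1)) := by
        intro t
        unfold vE
        split_ifs <;> simp [hd] <;> ring
      simp only [heq]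
      have hpt : ∀ t ∈ range T,
          (vE d t - (if t = 0 then 0 else vE d (t-1)))^2
          ≤ 2 * (vE d t)^2 + 2 * (if t = 0 then 0 else vE d (t-1))^2 := by
        intro t _
        nlinarith [sq_nonneg (vE d t + (if t = 0 then 0 else vE d (t-1)))]
      calc ∑ t ∈ range T, (vE d t - (if t = 0 then 0 else vE d (t-1)))^2
          ≤ ∑ t ∈ range T, (2 * (vE d t)^2
              + 2 * (if t = 0 then 0 else vE d (t-1))^2) := Finset.sum_le_sum hpt
        _ = 2 * (∑ t ∈ range T, (vE d t)^2)
              + 2 * ∑ t ∈ range T, (if t = 0 then 0 else vE d (t-1))^2 := by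
            rw [Finset.sum_add_distrib, Finset.mul_sum, Finset.mul_sum]
        _ ≤ 4 * ∑ t ∈ range T, (vE d t)^2 := by
            have := shift_le T (vE d)
            linarith
        _ = 4 * ∑ i : Fin T, (x i - xstar i) ^ 2 := by
            rw [← Fin.sum_univ_eq_sum_range (fun t => (vE d t)^2)]
            congr 1
            exact Finset.sum_congr rfl fun i _ => by simp [vE, hd]
    exact main_ineq T μ hμ _ _ _ hZ
  · rw [quad_id B hB xstar]
    congr 1
    have hIcc : Finset.Icc 1 T = Finset.Ico 1 (T+1) := by
      rw [Finset.Ico_add_one_right_eq_Icc]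
    rw [hIcc, Finset.sum_Ico_eq_sum_range]
    simp only [Nat.add_sub_cancel]
    refine Finset.sum_congr rfl fun t ht => ?_
    have htT : t < T := Finset.mem_range.mp ht
    have h1 : vE xstar t = xs (t+1) := by
      simp only [vE, dif_pos htT]
      exact hxstar ⟨t, htT⟩
    rw [h1]
    by_cases h0 : t = 0
    · subst h0
      simp [hxs0]
    · rw [if_neg h0]
      have ht1 : t - 1 < T := by omega
      have h2 : vE xstar (t-1) = xs t := by
        simp only [vE, dif_pos ht1]
        rw [hxstar ⟨t-1, ht1⟩]
        have : (⟨t-1, ht1⟩ : Fin T).val + 1 = t := by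
          simp only [Fin.val_mk]; omega
        rw [this]
      rw [h2]
      have e1 : 1 + t = t + 1 := by omega
      have e2 : 1 + t - 1 = t := by omega
      rw [e1, Nat.add_sub_cancel]
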